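/- Every infinite subgroup of GL(d,ℤ) contains an element of infinite order; equivalently, a subgroup of GL(d,ℤ) is finite if and only if every element of it has finite order. -/

import Mathlib

open Matrix

private lemma pow_of_sq_zero {R : Type*} [Ring R] (c : R) (h : c * c = 0) :
    ∀ n : ℕ, (1 + c) ^ n = 1 + n • c
  | 0 => by simp
  | n + 1 => by
    rw [pow_succ, pow_of_sq_zero c h n, mul_add, add_mul, add_mul]
    simp only [mul_one, one_mul, smul_mul_assoc, h, smul_zero, add_zero, succ_nsmul']
    abel

private lemma cube_eq {R : Type*} [Ring R] (c : R) (h2 : (3 : ℕ) • (c * c) = 0)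
    (h3 : c * c * c = 0) : (1 + c) ^ 3 = 1 + (3 : ℕ) • c := by
  have e : (1 + c) ^ 3 = 1 + (3 : ℕ) • c + ((3 : ℕ) • (c * c) + c * c * c) := by
    noncomm_ring
  rw [e, h2, h3, add_zero, add_zero]

private lemma entry_dvd_mul {d : ℕ} (A B : Matrix (Fin d) (Fin d) ℤ) {a b : ℤ}
    (hA : ∀ i j, a ∣ A i j) (hB : ∀ i j, b ∣ B i j) :
    ∀ i j, a * b ∣ (A * B) i j := by
  intro i j
  rw [Matrix.mul_apply]
  exact Finset.dvd_sum fun l _ => mul_dvd_mul (hA i l) (hB l j)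

private lemma map_zero_of_dvd {d : ℕ} {N : ℕ} [NeZero N] (A : Matrix (Fin d) (Fin d) ℤ)
    (h : ∀ i j, (N : ℤ) ∣ A i j) :
    A.map (Int.cast : ℤ → ZMod N) = 0 := by
  ext i j
  rw [Matrix.map_apply]
  exact (ZMod.intCast_zmod_eq_zero_iff_dvd _ _).mpr (h i j)

private lemma key {d : ℕ} (A : Matrix (Fin d) (Fin d) ℤ) (p : ℕ) (hp : p.Prime)
    (hA : (1 + A) ^ p = 1) (h3 : ∀ i j, (3 : ℤ) ∣ A i j) : A = 0 := by
  have main : ∀ k : ℕ, ∀ i j, (3 : ℤ) ^ (k + 1) ∣ A i j := by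
    intro k
    induction k with
    | zero => simpa using h3
    | succ k ih =>
      set m := k + 1 with hm
      by_cases hp3 : p = 3
      · -- p = 3, work mod 3 ^ (m + 2)
        have : NeZero (3 ^ (m + 2)) := ⟨by positivity⟩
        set N : ℕ := 3 ^ (m + 2) with hN
        have hNZ : (N : ℤ) = (3 : ℤ) ^ (m + 2) := by push_cast [hN]; ring
        set ψ : Matrix (Fin d) (Fin d) ℤ →+* Matrix (Fin d) (Fin d) (ZMod N) := (Int.castRingHom (ZMod N)).mapMatrix with hψ
        have ψeq : ∀ M : Matrix (Fin d) (Fin d) ℤ, ψ M = M.map (Int.cast : ℤ → ZMod N) :=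
          fun _ => rfl
        set c : Matrix (Fin d) (Fin d) (ZMod N) := ψ A with hc
        have hAA : ∀ i j, (3 : ℤ) ^ (2 * m) ∣ (A * A) i j := by
          intro i j
          rw [two_mul, pow_add]
          exact entry_dvd_mul A A ih ih i j
        have hc3 : c * c * c = 0 := by
          have h' : ∀ i j, (N : ℤ) ∣ (A * A * A) i j := by
            intro i j
            refine dvd_trans ?_ (entry_dvd_mul (A * A) A hAA ih i j)
            rw [hNZ, ← pow_add]
            exact pow_dvd_pow (3 : ℤ) (by omega)
          rw [hc, ← _root_.map_mul, ← _root_.map_mul, ψeq]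
          exact map_zero_of_dvd _ h'
        have hc2 : (3 : ℕ) • (c * c) = 0 := by
          have h' : ∀ i j, (N : ℤ) ∣ ((3 : ℕ) • (A * A)) i j := by
            intro i j
            rw [Matrix.smul_apply, nsmul_eq_mul]
            push_cast
            refine dvd_trans ?_ (mul_dvd_mul_left (3 : ℤ) (hAA i j))
            rw [hNZ, ← pow_succ']
            exact pow_dvd_pow (3 : ℤ) (by omega)
          rw [hc, ← _root_.map_mul, ← map_nsmul, ψeq]
          exact map_zero_of_dvd _ h'
        have hexp : (1 + c) ^ 3 = 1 := by
          have h := congrArg ψ hA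
          rw [map_pow, _root_.map_add, _root_.map_one, hp3] at h
          exact h
        have h30 : (3 : ℕ) • c = 0 := by
          have h := (cube_eq c hc2 hc3).symm.trans hexp
          rwa [add_eq_left] at h
        intro i j
        have h1 := congrArg (fun M => M i j) h30
        simp only [Matrix.smul_apply, Matrix.zero_apply, hc, ψeq, Matrix.map_apply,
          nsmul_eq_mul] at h1
        have hz : ((3 * A i j : ℤ) : ZMod N) = 0 := by push_cast at h1 ⊢; exact h1
        have hdvd : (N : ℤ) ∣ 3 * A i j := (ZMod.intCast_zmod_eq_zero_iff_dvd _ _).mp hz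
        rw [hNZ] at hdvd
        have h33 : (3 : ℤ) * 3 ^ (m + 1) ∣ 3 * A i j := by
          refine dvd_trans (dvd_of_eq ?_) hdvd
          rw [← pow_succ']
        exact (mul_dvd_mul_iff_left (by norm_num : (3 : ℤ) ≠ 0)).mp h33
      · -- p ≠ 3, work mod 3 ^ (m + 1)
        have : NeZero (3 ^ (m + 1)) := ⟨by positivity⟩
        set N : ℕ := 3 ^ (m + 1) with hN
        have hNZ : (N : ℤ) = (3 : ℤ) ^ (m + 1) := by push_cast [hN]; ring
        set ψ : Matrix (Fin d) (Fin d) ℤ →+* Matrix (Fin d) (Fin d) (ZMod N) := (Int.castRingHom (ZMod N)).mapMatrix with hψ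
        have ψeq : ∀ M : Matrix (Fin d) (Fin d) ℤ, ψ M = M.map (Int.cast : ℤ → ZMod N) :=
          fun _ => rfl
        set c : Matrix (Fin d) (Fin d) (ZMod N) := ψ A with hc
        have hcc : c * c = 0 := by
          have h' : ∀ i j, (N : ℤ) ∣ (A * A) i j := by
            intro i j
            refine dvd_trans ?_ (entry_dvd_mul A A ih ih i j)
            rw [hNZ, ← pow_add]
            exact pow_dvd_pow (3 : ℤ) (by omega)
          rw [hc, ← _root_.map_mul, ψeq]
          exact map_zero_of_dvd _ h'
        have hexp : (1 + c) ^ p = 1 := by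
          have h := congrArg ψ hA
          rw [map_pow, _root_.map_add, _root_.map_one] at h
          exact h
        have hp0 : p • c = 0 := by
          have h := (pow_of_sq_zero c hcc p).symm.trans hexp
          rwa [add_eq_left] at h
        intro i j
        have h1 := congrArg (fun M => M i j) hp0
        simp only [Matrix.smul_apply, Matrix.zero_apply, hc, ψeq, Matrix.map_apply,
          nsmul_eq_mul] at h1
        have hz : (((p : ℤ) * A i j : ℤ) : ZMod N) = 0 := by push_cast; exact_mod_cast h1
        have hdvd : (N : ℤ) ∣ (p : ℤ) * A i j := (ZMod.intCast_zmod_eq_zero_iff_dvd _ _).mp hz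
        rw [hNZ] at hdvd
        have h3p : ¬ (3 : ℤ) ∣ (p : ℤ) := by
          intro hd
          have : (3 : ℕ) ∣ p := by exact_mod_cast hd
          exact hp3 ((Nat.prime_dvd_prime_iff_eq Nat.prime_three hp).mp this).symm
        exact (Int.prime_iff_natAbs_prime.mpr (by norm_num)).pow_dvd_of_dvd_mul_left _ h3p hdvd
  ext i j
  obtain ⟨k, hk⟩ := pow_unbounded_of_one_lt (|A i j|) (by norm_num : (1 : ℤ) < 3)
  have hdvd := main k i j
  have h0 : A i j = 0 :=
    Int.eq_zero_of_abs_lt_dvd hdvd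
      (lt_of_lt_of_le hk (pow_le_pow_right₀ (by norm_num) (Nat.le_succ k)))
  simpa using h0

private lemma ker_torsion_free {d : ℕ} (x : GL (Fin d) ℤ) (hx : IsOfFinOrder x)
    (hker : ((Int.castRingHom (ZMod 3)).mapMatrix :
        Matrix (Fin d) (Fin d) ℤ →+* Matrix (Fin d) (Fin d) (ZMod 3)) (x : Matrix (Fin d) (Fin d) ℤ) = 1) :
    x = 1 := by
  by_contra hne
  set n := orderOf x with hn
  have hn1 : n ≠ 1 := fun h => hne (orderOf_eq_one_iff.mp h)
  have hnpos : 0 < n := hx.orderOf_pos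
  set p := n.minFac with hpdef
  have hp : p.Prime := Nat.minFac_prime hn1
  set y := x ^ (n / p) with hy
  have hyp : y ^ p = 1 := by
    rw [hy, ← pow_mul, Nat.div_mul_cancel (Nat.minFac_dvd n)]
    exact pow_orderOf_eq_one x
  have hyne : y ≠ 1 := by
    intro h
    have hx1 : x ^ (n / p) = 1 := by rw [← hy]; exact h
    have hdvd : n ∣ n / p := orderOf_dvd_of_pow_eq_one hx1
    have hpos : 0 < n / p := Nat.div_pos (Nat.minFac_le hnpos) hp.pos
    have hle := Nat.le_of_dvd hpos hdvd
    have hlt : n / p < n := Nat.div_lt_self hnpos hp.one_lt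
    omega
  -- the matrix of y
  set ψ := ((Int.castRingHom (ZMod 3)).mapMatrix :
      Matrix (Fin d) (Fin d) ℤ →+* Matrix (Fin d) (Fin d) (ZMod 3)) with hψ
  have hkery : ψ (y : Matrix (Fin d) (Fin d) ℤ) = 1 := by
    rw [hy, Units.val_pow_eq_pow_val, map_pow, hker, one_pow]
  set A : Matrix (Fin d) (Fin d) ℤ := (y : Matrix (Fin d) (Fin d) ℤ) - 1 with hA
  have h1A : 1 + A = (y : Matrix (Fin d) (Fin d) ℤ) := by rw [hA]; abel
  have hpow : (1 + A) ^ p = 1 := by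
    rw [h1A, ← Units.val_pow_eq_pow_val, hyp, Units.val_one]
  have h3 : ∀ i j, (3 : ℤ) ∣ A i j := by
    have : ψ A = 0 := by rw [hA, map_sub, hkery, _root_.map_one, sub_self]
    intro i j
    have h0 := congrArg (fun M => M i j) this
    simp only [Matrix.zero_apply] at h0
    have : ((A i j : ℤ) : ZMod 3) = 0 := h0
    exact_mod_cast (ZMod.intCast_zmod_eq_zero_iff_dvd _ 3).mp this
  have hA0 : A = 0 := key A p hp hpow h3
  have : (y : Matrix (Fin d) (Fin d) ℤ) = 1 := by
    rw [← h1A, hA0, add_zero]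
  exact hyne (Units.ext this)

/-- A subgroup of `GL(d,ℤ)` is finite if and only if it is periodic (every element has
finite order); equivalently, every infinite subgroup contains an element of infinite order. -/
theorem subgroup_glZ_finite_iff_torsion (d : ℕ) (H : Subgroup (GL (Fin d) ℤ)) :
    (H : Set (GL (Fin d) ℤ)).Finite ↔ ∀ x ∈ H, IsOfFinOrder x := by
  constructor
  · intro hfin x hxH
    have : Finite H := hfin.to_subtype
    have h := isOfFinOrder_of_finite (⟨x, hxH⟩ : H)
    obtain ⟨n, hnpos, hn⟩ := isOfFinOrder_iff_pow_eq_one.mp h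
    refine isOfFinOrder_iff_pow_eq_one.mpr ⟨n, hnpos, ?_⟩
    have := congrArg (Subtype.val) hn
    simpa using this
  · intro htor
    set φ : GL (Fin d) ℤ →* GL (Fin d) (ZMod 3) :=
      Units.map ((Int.castRingHom (ZMod 3)).mapMatrix :
        Matrix (Fin d) (Fin d) ℤ →+* Matrix (Fin d) (Fin d) (ZMod 3)).toMonoidHom with hφ
    have hinj : Function.Injective (fun h : H => φ (h : GL (Fin d) ℤ)) := by
      intro a b hab
      simp only at hab
      have hz : φ ((a : GL (Fin d) ℤ) * (b : GL (Fin d) ℤ)⁻¹) = 1 := by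
        rw [_root_.map_mul, map_inv, hab, mul_inv_cancel]
      have hmem : (a : GL (Fin d) ℤ) * (b : GL (Fin d) ℤ)⁻¹ ∈ H :=
        H.mul_mem a.2 (H.inv_mem b.2)
      have hfo : IsOfFinOrder ((a : GL (Fin d) ℤ) * (b : GL (Fin d) ℤ)⁻¹) := htor _ hmem
      have hker : ((Int.castRingHom (ZMod 3)).mapMatrix :
          Matrix (Fin d) (Fin d) ℤ →+* Matrix (Fin d) (Fin d) (ZMod 3))
          (((a : GL (Fin d) ℤ) * (b : GL (Fin d) ℤ)⁻¹ : GL (Fin d) ℤ) : Matrix (Fin d) (Fin d) ℤ) = 1 := by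
        have h := congrArg Units.val hz
        rw [hφ, Units.coe_map] at h
        exact h
      have h1 : (a : GL (Fin d) ℤ) * (b : GL (Fin d) ℤ)⁻¹ = 1 :=
        ker_torsion_free _ hfo hker
      have : (a : GL (Fin d) ℤ) = (b : GL (Fin d) ℤ) := by
        rwa [mul_inv_eq_one] at h1
      exact Subtype.ext this
    have : Finite H := Finite.of_injective _ hinj
    exact Set.finite_coe_iff.mp this
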